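/- Let mu_beta be the probability measure on [-1,1] with density proportional to (1-x)^{p-1}(1+x)^{q-1} for p, q > 0. Then for every continuously differentiable function f on [-1,1] with mean zero under mu_beta, Var(f) <= (1/(p+q)) * integral of (1-x^2) |f'(x)|^2 dmu_beta(x). -/

import Mathlib

open Polynomial MeasureTheory Set Filter
open scoped ENNReal NNReal
set_option maxHeartbeats 1000000

namespace JacobiAux

noncomputable section
variable (p q : ℝ)

/-- eigenvalue -/
def lam (n : ℕ) : ℝ := n * (n + p + q - 1)

/-- Jacobi operator on polynomials -/
def Lop (f : ℝ[X]) : ℝ[X] :=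
  derivative (derivative f) - derivative (derivative f) * X ^ 2
    + C (q - p) * derivative f - C (p + q) * derivative f * X

lemma lam_zero : lam p q 0 = 0 := by simp [lam]

lemma lam_lt {d n : ℕ} (hpq : 0 < p + q) (h : d < n) : lam p q d < lam p q n := by
  have hd : (d:ℝ) < n := by exact_mod_cast h
  have h1 : (1:ℝ) ≤ n := by exact_mod_cast Nat.one_le_iff_ne_zero.2 (by omega)
  have h0 : (0:ℝ) ≤ d := Nat.cast_nonneg d
  unfold lam
  nlinarith

lemma lam_ge (n : ℕ) (hpq : 0 < p + q) (h : 1 ≤ n) : p + q ≤ lam p q n := by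
  have h1 : (1:ℝ) ≤ n := by exact_mod_cast h
  have : lam p q n = n*n + n*(p+q) - n := by unfold lam; ring
  nlinarith

lemma eval_Lop (f : ℝ[X]) (x : ℝ) :
    (Lop p q f).eval x = (1 - x^2) * (derivative (derivative f)).eval x
      + (q - p - (p+q)*x) * (derivative f).eval x := by
  simp [Lop]; ring

lemma coeff_Lop (f : ℝ[X]) (d : ℕ) (hd : f.natDegree ≤ d) :
    (Lop p q f).coeff d = -(lam p q d) * f.coeff d := by
  have h1 : f.coeff (d+1) = 0 := coeff_eq_zero_of_natDegree_lt (by omega)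
  have h2 : f.coeff (d+2) = 0 := coeff_eq_zero_of_natDegree_lt (by omega)
  have hD : ∀ k, (derivative f).coeff k = f.coeff (k+1) * (k+1) := fun k => coeff_derivative f k
  have hDD : ∀ k, (derivative (derivative f)).coeff k = f.coeff (k+2) * (k+2) * (k+1) := by
    intro k
    rw [coeff_derivative, coeff_derivative]
    push_cast; ring
  simp only [Lop, coeff_add, coeff_sub, coeff_C_mul, mul_assoc]
  match d with
  | 0 =>
    simp only [coeff_mul_X_pow', coeff_mul_X_zero, hDD, hD]
    norm_num [h1, h2, lam_zero]
  | 1 =>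
    have h3 : f.coeff 3 = 0 := coeff_eq_zero_of_natDegree_lt (by omega)
    rw [coeff_mul_X_pow']
    simp only [hDD, hD, coeff_mul_X, show (1:ℕ)+1 = 2 from rfl, show (1:ℕ)+2 = 3 from rfl,
      show (0:ℕ)+1 = 1 from rfl, h3, h2]
    norm_num [h1, h2, lam]
    ring
  | (k+2) =>
    have h3 : f.coeff (k+4) = 0 := coeff_eq_zero_of_natDegree_lt (by omega)
    have h1' : f.coeff (3+k) = 0 := by rw [show 3+k = k+2+1 from by omega]; exact h1
    have h2' : f.coeff (4+k) = 0 := by rw [show 4+k = k+4 from by omega]; exact h3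
    rw [coeff_mul_X_pow']
    have hk : k + 2 - 2 = k := by omega
    simp only [show (2 ≤ k + 2) from by omega, if_true, hk, hDD, hD,
      show k+2-1+1 = k+2 from by omega, coeff_mul_X, h3,
      show k+2+2 = k+4 from rfl, show k+1+1 = k+2 from rfl]
    simp only [lam, h1', h2', show k+2+1 = 3+k from by omega, show k+4 = 4+k from by omega]
    push_cast; ring

lemma natDegree_Lop_le (f : ℝ[X]) : (Lop p q f).natDegree ≤ f.natDegree := by
  rw [natDegree_le_iff_coeff_eq_zero]
  intro N hN
  rw [coeff_Lop p q f N (le_of_lt hN), coeff_eq_zero_of_natDegree_lt hN, mul_zero]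

/-- Lop as a linear map -/
def LopL : ℝ[X] →ₗ[ℝ] ℝ[X] where
  toFun := Lop p q
  map_add' f g := by simp only [Lop, derivative_add]; ring
  map_smul' c f := by
    simp only [Lop, derivative_smul, RingHom.id_apply, smul_sub, smul_add, smul_eq_C_mul,
      derivative_C_mul]
    ring

lemma exists_psi (hpq : 0 < p + q) (n : ℕ) :
    ∃ ψ : ℝ[X], ψ.natDegree ≤ n ∧ ψ.coeff n = 1 ∧ Lop p q ψ = -(lam p q n) • ψ := by
  classical
  set S : ℝ[X] →ₗ[ℝ] ℝ[X] := LopL p q + lam p q n • LinearMap.id with hS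
  have hSapply : ∀ f, S f = Lop p q f + lam p q n • f := fun f => rfl
  have hcoeffS : ∀ (f : ℝ[X]) d, f.natDegree ≤ d →
      (S f).coeff d = (lam p q n - lam p q d) * f.coeff d := by
    intro f d hd
    rw [hSapply, coeff_add, coeff_Lop p q f d hd, coeff_smul]
    simp only [smul_eq_mul]; ring
  have hker : ∀ g ∈ degreeLT ℝ n, S g = 0 → g = 0 := by
    intro g hg hSg
    by_contra hg0
    have hdeg : g.natDegree < n := by
      have := mem_degreeLT.mp hg
      exact_mod_cast (natDegree_lt_iff_degree_lt hg0).mpr (by exact_mod_cast this)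
    have hc := hcoeffS g g.natDegree le_rfl
    rw [hSg, coeff_zero] at hc
    have hlam : lam p q g.natDegree < lam p q n := lam_lt p q hpq hdeg
    have hlc : g.coeff g.natDegree ≠ 0 := fun h => hg0 (leadingCoeff_eq_zero.mp h)
    rcases mul_eq_zero.mp hc.symm with h | h
    · linarith
    · exact hlc h
  have hdegmem : ∀ f : ℝ[X], f ∈ degreeLT ℝ n → ∀ m, n ≤ m → f.natDegree ≤ m := by
    intro f hf m hm
    by_cases h0 : f = 0
    · simp [h0]
    · have := (natDegree_lt_iff_degree_lt h0).mpr (by exact_mod_cast mem_degreeLT.mp hf)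
      omega
  have hmaps : ∀ f ∈ degreeLT ℝ n, S f ∈ degreeLT ℝ n := by
    intro f hf
    rw [mem_degreeLT, degree_lt_iff_coeff_zero]
    intro m hm
    rw [hcoeffS f m (hdegmem f hf m hm),
      (degree_lt_iff_coeff_zero f n).mp (mem_degreeLT.mp hf) m hm, mul_zero]
  -- finite dimensionality of degreeLT
  haveI : FiniteDimensional ℝ ↥(degreeLT ℝ n) :=
    Module.Finite.equiv (degreeLTEquiv ℝ n).symm
  set T := S.restrict hmaps with hT
  have hTinj : Function.Injective T := by
    intro a b hab
    have : S (a.1 - b.1) = 0 := by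
      have h1 : S a.1 = S b.1 := congrArg Subtype.val hab
      rw [map_sub, h1, sub_self]
    have := hker (a.1 - b.1) (sub_mem a.2 b.2) this
    exact Subtype.ext (by rwa [sub_eq_zero] at this)
  have hTsurj : Function.Surjective T := LinearMap.surjective_of_injective hTinj
  -- S (X^n) lies in degreeLT n
  have hXn : S (X ^ n : ℝ[X]) ∈ degreeLT ℝ n := by
    rw [mem_degreeLT, degree_lt_iff_coeff_zero]
    intro m hm
    rw [hcoeffS (X ^ n) m (by simpa [natDegree_X_pow] using hm)]
    rcases eq_or_lt_of_le hm with h | h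
    · rw [← h, sub_self, zero_mul]
    · rw [coeff_X_pow, if_neg (by omega), mul_zero]
  obtain ⟨r, hr⟩ := hTsurj ⟨S (X ^ n), hXn⟩
  have hrS : S r.1 = S (X ^ n) := congrArg Subtype.val hr
  refine ⟨X ^ n - r.1, ?_, ?_, ?_⟩
  · refine (natDegree_sub_le _ _).trans (max_le (by simp [natDegree_X_pow]) ?_)
    exact hdegmem r.1 r.2 n le_rfl
  · rw [coeff_sub, coeff_X_pow, if_pos rfl,
      (degree_lt_iff_coeff_zero r.1 n).mp (mem_degreeLT.mp r.2) n le_rfl, sub_zero]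
  · have h0 : S (X ^ n - r.1) = 0 := by rw [map_sub, hrS, sub_self]
    rw [hSapply] at h0
    have := eq_neg_of_add_eq_zero_left h0
    rw [this, neg_smul]

/-! ### Analysis part -/

/-- the (normalized) weight -/
def W (p q Z : ℝ) (x : ℝ) : ℝ := (1 - x) ^ (p - 1) * (1 + x) ^ (q - 1) / Z

variable (Z : ℝ)

lemma contW : ContinuousOn (W p q Z) (Ioo (-1:ℝ) 1) := by
  apply ContinuousOn.div_const
  apply ContinuousOn.mul
  · exact ((continuous_const.sub continuous_id).continuousOn).rpow_const
      (fun x hx => Or.inl (by simp only [mem_Ioo] at hx; intro h; simp only [Pi.sub_apply, id_eq] at h; linarith [hx.1, hx.2]))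
  · exact ((continuous_const.add continuous_id).continuousOn).rpow_const
      (fun x hx => Or.inl (by simp only [mem_Ioo] at hx; intro h; simp only [Pi.add_apply, id_eq] at h; linarith [hx.1, hx.2]))

lemma W_nonneg (hZ : 0 < Z) {x : ℝ} (hx : x ∈ Ioo (-1:ℝ) 1) : 0 ≤ W p q Z x := by
  simp only [mem_Ioo] at hx
  apply div_nonneg _ hZ.le
  exact mul_nonneg (Real.rpow_nonneg (by linarith) _) (Real.rpow_nonneg (by linarith) _)

lemma integrable_mul_W (hZ : 0 < Z)
    (hWint : IntegrableOn (W p q Z) (Ioo (-1:ℝ) 1) volume)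
    {g : ℝ → ℝ} (hg : ContinuousOn g (Icc (-1:ℝ) 1)) :
    IntegrableOn (fun x => g x * W p q Z x) (Ioo (-1:ℝ) 1) volume := by
  obtain ⟨C, hC⟩ := isCompact_Icc.exists_bound_of_continuousOn hg
  refine Integrable.mono' (hWint.const_mul C) ?_ ?_
  · exact ((hg.mono Ioo_subset_Icc_self).mul (contW p q Z)).aestronglyMeasurable
      measurableSet_Ioo
  · refine (ae_restrict_iff' measurableSet_Ioo).mpr (Filter.Eventually.of_forall ?_)
    intro x hx
    have h1 := W_nonneg p q Z hZ hx
    have h2 := hC x (Ioo_subset_Icc_self hx)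
    rw [Real.norm_eq_abs, abs_mul, abs_of_nonneg h1]
    exact mul_le_mul_of_nonneg_right (by simpa using h2) h1

/-- the integration-by-parts identity -/
lemma ibp (hp : 0 < p) (hq : 0 < q) (hZ : 0 < Z)
    (hWint : IntegrableOn (W p q Z) (Ioo (-1:ℝ) 1) volume) (u : ℝ[X]) :
    ∫ x in Ioo (-1:ℝ) 1,
      ((1 - x^2) * (derivative u).eval x + (q - p - (p+q)*x) * u.eval x) * W p q Z x = 0 := by
  set G : ℝ → ℝ := fun x =>
    ((1 - x^2) * (derivative u).eval x + (q - p - (p+q)*x) * u.eval x) * W p q Z x with hG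
  set F : ℝ → ℝ := fun x => (1 - x) ^ p * (1 + x) ^ q * u.eval x / Z with hF
  have hderiv : ∀ x ∈ Ioo (-1:ℝ) 1, HasDerivAt F (G x) x := by
    intro x hx
    simp only [mem_Ioo] at hx
    have h1x : (0:ℝ) < 1 - x := by linarith
    have h2x : (0:ℝ) < 1 + x := by linarith
    have d1 : HasDerivAt (fun y : ℝ => (1 - y) ^ p) (-(p * (1-x)^(p-1))) x := by
      have hinner : HasDerivAt (fun y : ℝ => 1 - y) (-1) x := (hasDerivAt_id x).const_sub 1
      have houter : HasDerivAt (fun y : ℝ => y ^ p) (p * (1-x)^(p-1)) (1 - x) :=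
        Real.hasDerivAt_rpow_const (Or.inl h1x.ne')
      simpa [Function.comp_def] using houter.comp x hinner
    have d2 : HasDerivAt (fun y : ℝ => (1 + y) ^ q) (q * (1+x)^(q-1)) x := by
      have hinner : HasDerivAt (fun y : ℝ => 1 + y) 1 x := (hasDerivAt_id x).const_add 1
      have houter : HasDerivAt (fun y : ℝ => y ^ q) (q * (1+x)^(q-1)) (1 + x) :=
        Real.hasDerivAt_rpow_const (Or.inl h2x.ne')
      simpa [Function.comp_def] using houter.comp x hinner
    have d3 : HasDerivAt (fun y : ℝ => u.eval y) ((derivative u).eval x) x :=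
      u.hasDerivAt x
    have dF := (((d1.mul d2).mul d3).div_const Z)
    refine dF.congr_deriv ?_
    symm
    have e1 : (1-x)^p = (1-x)^(p-1) * (1-x) := by
      rw [← Real.rpow_add_one h1x.ne' (p-1)]; ring_nf
    have e2 : (1+x)^q = (1+x)^(q-1) * (1+x) := by
      rw [← Real.rpow_add_one h2x.ne' (q-1)]; ring_nf
    simp only [hG, W, Pi.mul_apply]
    rw [e1, e2]
    field_simp
    ring
  have hint : IntervalIntegrable G volume (-1) 1 := by
    rw [intervalIntegrable_iff_integrableOn_Ioo_of_le (by norm_num)]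
    exact integrable_mul_W p q Z hZ hWint (Continuous.continuousOn (((continuous_const.sub ((continuous_id.pow 2))).mul (derivative u).continuous).add
        (((continuous_const.sub (continuous_const.mul continuous_id))).mul u.continuous)))
  have htb : Filter.Tendsto F (nhdsWithin (-1 : ℝ) (Ioi (-1:ℝ))) (nhds 0) := by
    have hc : ContinuousAt F (-1) := by
      apply ContinuousAt.div_const
      apply ContinuousAt.mul
      apply ContinuousAt.mul
      · exact ((Real.continuousAt_rpow_const _ _ (Or.inl (by norm_num)))).comp
          ((continuous_const.sub continuous_id).continuousAt)
      · exact ((Real.continuousAt_rpow_const _ _ (Or.inr hq.le))).comp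
          ((continuous_const.add continuous_id).continuousAt)
      · exact u.continuous.continuousAt
    have hv : F (-1) = 0 := by
      simp [hF, Real.zero_rpow hq.ne']
    rw [← hv]
    exact (hc.tendsto).mono_left nhdsWithin_le_nhds
  have hta : Filter.Tendsto F (nhdsWithin (1 : ℝ) (Iio (1:ℝ))) (nhds 0) := by
    have hc : ContinuousAt F 1 := by
      apply ContinuousAt.div_const
      apply ContinuousAt.mul
      apply ContinuousAt.mul
      · exact ((Real.continuousAt_rpow_const _ _ (Or.inr hp.le))).comp
          ((continuous_const.sub continuous_id).continuousAt)
      · exact ((Real.continuousAt_rpow_const _ _ (Or.inl (by norm_num)))).comp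
          ((continuous_const.add continuous_id).continuousAt)
      · exact u.continuous.continuousAt
    have hv : F 1 = 0 := by
      simp [hF, Real.zero_rpow hp.ne']
    rw [← hv]
    exact (hc.tendsto).mono_left nhdsWithin_le_nhds
  have key := intervalIntegral.integral_eq_sub_of_hasDerivAt_of_tendsto
    (by norm_num : (-1:ℝ) < 1) hderiv hint htb hta
  rw [sub_zero] at key
  rw [← MeasureTheory.integral_Ioc_eq_integral_Ioo, ← intervalIntegral.integral_of_le (by norm_num)]
  exact key


/-- inner product of two polynomials -/
def Jin (f g : ℝ[X]) : ℝ := ∫ x in Ioo (-1:ℝ) 1, f.eval x * g.eval x * W p q Z x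

/-- Dirichlet form of two polynomials -/
def JB (f g : ℝ[X]) : ℝ := ∫ x in Ioo (-1:ℝ) 1,
  (1 - x^2) * ((derivative f).eval x * (derivative g).eval x) * W p q Z x

variable {p q Z}

section forms
variable (hZ : 0 < Z) (hWint : IntegrableOn (W p q Z) (Ioo (-1:ℝ) 1) volume)

include hZ hWint

lemma Jin_integrable (f g : ℝ[X]) :
    IntegrableOn (fun x => f.eval x * g.eval x * W p q Z x) (Ioo (-1:ℝ) 1) volume :=
  integrable_mul_W p q Z hZ hWint ((f.continuous.mul g.continuous).continuousOn)

lemma JB_integrable (f g : ℝ[X]) :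
    IntegrableOn (fun x => (1 - x^2) * ((derivative f).eval x * (derivative g).eval x)
      * W p q Z x) (Ioo (-1:ℝ) 1) volume :=
  integrable_mul_W p q Z hZ hWint
    (((continuous_const.sub (continuous_id.pow 2)).mul
      ((derivative f).continuous.mul (derivative g).continuous)).continuousOn)

omit hZ hWint

lemma Jin_comm (f g : ℝ[X]) : Jin p q Z f g = Jin p q Z g f := by
  unfold Jin; congr 1; funext x; ring

lemma JB_comm (f g : ℝ[X]) : JB p q Z f g = JB p q Z g f := by
  unfold JB; congr 1; funext x; ring

lemma Jin_Cmul_left (c : ℝ) (f g : ℝ[X]) : Jin p q Z (C c * f) g = c * Jin p q Z f g := by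
  unfold Jin
  rw [← MeasureTheory.integral_const_mul]
  congr 1; funext x; simp [eval_mul]; ring

lemma Jin_smul_left (c : ℝ) (f g : ℝ[X]) : Jin p q Z (c • f) g = c * Jin p q Z f g := by
  rw [smul_eq_C_mul, Jin_Cmul_left]

lemma JB_Cmul_left (c : ℝ) (f g : ℝ[X]) : JB p q Z (C c * f) g = c * JB p q Z f g := by
  unfold JB
  rw [← MeasureTheory.integral_const_mul]
  congr 1; funext x; simp [derivative_C_mul, eval_mul]; ring

include hZ hWint

lemma Jin_add_left (f g h : ℝ[X]) :
    Jin p q Z (f + g) h = Jin p q Z f h + Jin p q Z g h := by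
  unfold Jin
  rw [← integral_add (Jin_integrable hZ hWint f h) (Jin_integrable hZ hWint g h)]
  congr 1; funext x; simp [eval_add]; ring

lemma Jin_sub_left (f g h : ℝ[X]) :
    Jin p q Z (f - g) h = Jin p q Z f h - Jin p q Z g h := by
  unfold Jin
  rw [← integral_sub (Jin_integrable hZ hWint f h) (Jin_integrable hZ hWint g h)]
  congr 1; funext x; simp [eval_sub]; ring

lemma JB_add_left (f g h : ℝ[X]) :
    JB p q Z (f + g) h = JB p q Z f h + JB p q Z g h := by
  unfold JB
  rw [← integral_add (JB_integrable hZ hWint f h) (JB_integrable hZ hWint g h)]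
  congr 1; funext x; simp [derivative_add, eval_add]; ring

lemma JB_sub_left (f g h : ℝ[X]) :
    JB p q Z (f - g) h = JB p q Z f h - JB p q Z g h := by
  unfold JB
  rw [← integral_sub (JB_integrable hZ hWint f h) (JB_integrable hZ hWint g h)]
  congr 1; funext x; simp [derivative_sub, eval_sub]; ring

lemma Jin_self_nonneg (f : ℝ[X]) : 0 ≤ Jin p q Z f f := by
  apply setIntegral_nonneg measurableSet_Ioo
  intro x hx
  exact mul_nonneg (mul_self_nonneg _) (W_nonneg p q Z hZ hx)

/-- Green's identity from IBP -/
lemma JB_eq_Lop (hp : 0 < p) (hq : 0 < q) (f g : ℝ[X]) :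
    JB p q Z f g = - Jin p q Z (Lop p q f) g := by
  have H := ibp p q Z hp hq hZ hWint (derivative f * g)
  rw [eq_neg_iff_add_eq_zero]
  unfold JB Jin
  rw [← integral_add (JB_integrable hZ hWint f g) (Jin_integrable hZ hWint (Lop p q f) g)]
  rw [← H]
  congr 1; funext x
  rw [eval_Lop, derivative_mul]
  simp only [eval_add, eval_mul]
  ring

omit hZ hWint in
lemma Jin_zero_left (g : ℝ[X]) : Jin p q Z 0 g = 0 := by
  unfold Jin; simp

omit hZ hWint in
lemma JB_zero_left (g : ℝ[X]) : JB p q Z 0 g = 0 := by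
  unfold JB; simp

omit hZ hWint in
lemma Jin_Cmul_right (c : ℝ) (f g : ℝ[X]) : Jin p q Z f (C c * g) = c * Jin p q Z f g := by
  rw [Jin_comm, Jin_Cmul_left, Jin_comm]

omit hZ hWint in
lemma JB_Cmul_right (c : ℝ) (f g : ℝ[X]) : JB p q Z f (C c * g) = c * JB p q Z f g := by
  rw [JB_comm, JB_Cmul_left, JB_comm]

lemma Jin_add_right (f g h : ℝ[X]) :
    Jin p q Z f (g + h) = Jin p q Z f g + Jin p q Z f h := by
  rw [Jin_comm, Jin_add_left hZ hWint, Jin_comm, Jin_comm (f := h)]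

lemma JB_add_right (f g h : ℝ[X]) :
    JB p q Z f (g + h) = JB p q Z f g + JB p q Z f h := by
  rw [JB_comm, JB_add_left hZ hWint, JB_comm, JB_comm (f := h)]

end forms

section main
variable (hp : 0 < p) (hq : 0 < q) (hZ : 0 < Z)
  (hWint : IntegrableOn (W p q Z) (Ioo (-1:ℝ) 1) volume)
  (hWone : (∫ x in Ioo (-1:ℝ) 1, W p q Z x) = 1)

include hp hq hZ hWint hWone

/-- the polynomial Poincaré inequality -/
lemma poly_poincare (P : ℝ[X]) (hmean : Jin p q Z P 1 = 0) :
    (p + q) * Jin p q Z P P ≤ JB p q Z P P := by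
  have hpq : 0 < p + q := by linarith
  classical
  obtain ⟨ψ, hψ⟩ : ∃ ψ : ℕ → ℝ[X], ∀ n, (ψ n).natDegree ≤ n ∧ (ψ n).coeff n = 1 ∧
      Lop p q (ψ n) = -(lam p q n) • (ψ n) := by
    choose ψ h1 h2 h3 using exists_psi p q hpq
    exact ⟨ψ, fun n => ⟨h1 n, h2 n, h3 n⟩⟩
  have hψdeg := fun n => (hψ n).1
  have hψcoeff := fun n => (hψ n).2.1
  have hψL := fun n => (hψ n).2.2
  have hψ0 : ψ 0 = 1 := by
    have h := eq_C_of_natDegree_le_zero (hψdeg 0)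
    rw [h]
    rw [show (ψ 0).coeff 0 = 1 from hψcoeff 0]
    simp
  have hdiag : ∀ j, JB p q Z (ψ j) (ψ j) = lam p q j * Jin p q Z (ψ j) (ψ j) := by
    intro j
    rw [JB_eq_Lop hZ hWint hp hq, hψL j, Jin_smul_left]
    ring
  have hortho : ∀ j k, j ≠ k → Jin p q Z (ψ j) (ψ k) = 0 := by
    intro j k hjk
    have e1 : JB p q Z (ψ j) (ψ k) = lam p q j * Jin p q Z (ψ j) (ψ k) := by
      rw [JB_eq_Lop hZ hWint hp hq, hψL j, Jin_smul_left]; ring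
    have e2 : JB p q Z (ψ k) (ψ j) = lam p q k * Jin p q Z (ψ k) (ψ j) := by
      rw [JB_eq_Lop hZ hWint hp hq, hψL k, Jin_smul_left]; ring
    rw [JB_comm, e1, Jin_comm (f := ψ k)] at e2
    have hne : lam p q j ≠ lam p q k := by
      rcases Nat.lt_or_ge j k with h | h
      · exact ne_of_lt (lam_lt p q hpq h)
      · exact ne_of_gt (lam_lt p q hpq (by omega))
    by_contra hc
    exact hne (by
      have := sub_eq_zero.mpr e2
      rw [← sub_mul] at this
      rcases mul_eq_zero.mp this with h | h
      · linarith [sub_eq_zero.mp (by linarith : lam p q j - lam p q k = 0)]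
      · exact absurd h hc)
  have hlower : ∀ n m (g : ℝ[X]), g.natDegree ≤ m → m < n → Jin p q Z (ψ n) g = 0 := by
    intro n m
    induction m with
    | zero =>
      intro g hdeg hlt
      rw [eq_C_of_natDegree_le_zero hdeg, Jin_comm,
        show (C (g.coeff 0) : ℝ[X]) = C (g.coeff 0) * 1 from (mul_one _).symm,
        Jin_Cmul_left, Jin_comm, ← hψ0, hortho n 0 (by omega), mul_zero]
    | succ m ih =>
      intro g hdeg hlt
      set c := g.coeff (m+1) with hc
      set g' := g - C c * ψ (m+1) with hg'
      have hdeg' : g'.natDegree ≤ m := by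
        rw [natDegree_le_iff_coeff_eq_zero]
        intro N hN
        rw [hg', coeff_sub, coeff_C_mul]
        rcases eq_or_lt_of_le (Nat.succ_le_of_lt hN) with h | h
        · rw [← h, hψcoeff (m+1), mul_one, hc, sub_self]
        · rw [coeff_eq_zero_of_natDegree_lt (lt_of_le_of_lt hdeg h),
            coeff_eq_zero_of_natDegree_lt (lt_of_le_of_lt (hψdeg (m+1)) h), mul_zero, sub_self]
      have hsplit : g = g' + C c * ψ (m+1) := by rw [hg']; ring
      rw [Jin_comm, hsplit, Jin_add_left hZ hWint, Jin_Cmul_left,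
        Jin_comm (f := g'), ih g' hdeg' (by omega),
        hortho (m+1) n (by omega), mul_zero, add_zero]
  -- main induction
  have main : ∀ n (P : ℝ[X]), P.natDegree ≤ n → Jin p q Z P 1 = 0 →
      (p + q) * Jin p q Z P P ≤ JB p q Z P P := by
    intro n
    induction n with
    | zero =>
      intro P hdeg hm
      have hP : P = C (P.coeff 0) := eq_C_of_natDegree_le_zero hdeg
      have h11 : Jin p q Z 1 1 = 1 := by
        have he : Jin p q Z 1 1 = ∫ x in Ioo (-1:ℝ) 1, W p q Z x := by
          unfold Jin
          refine setIntegral_congr_fun measurableSet_Ioo fun x _ => by simp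
        rw [he, hWone]
      have ha : P.coeff 0 = 0 := by
        have hm' : Jin p q Z (C (P.coeff 0) * 1) 1 = 0 := by
          rw [mul_one, ← hP]; exact hm
        rw [Jin_Cmul_left, h11, mul_one] at hm'
        exact hm'
      have hP0 : P = 0 := by rw [hP, ha, map_zero]
      rw [hP0, Jin_zero_left, JB_zero_left, mul_zero]
    | succ n ih =>
      intro P hdeg hm
      set c := P.coeff (n+1) with hc
      set R := P - C c * ψ (n+1) with hR
      have hdegR : R.natDegree ≤ n := by
        rw [natDegree_le_iff_coeff_eq_zero]
        intro N hN
        rw [hR, coeff_sub, coeff_C_mul]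
        rcases eq_or_lt_of_le (Nat.succ_le_of_lt hN) with h | h
        · rw [← h, hψcoeff (n+1), mul_one, hc, sub_self]
        · rw [coeff_eq_zero_of_natDegree_lt (lt_of_le_of_lt hdeg h),
            coeff_eq_zero_of_natDegree_lt (lt_of_le_of_lt (hψdeg (n+1)) h), mul_zero, sub_self]
      have hsplit : P = R + C c * ψ (n+1) := by rw [hR]; ring
      have hmeanψ : Jin p q Z (ψ (n+1)) 1 = 0 := by
        rw [← hψ0]; exact hortho (n+1) 0 (by omega)
      have hmeanR : Jin p q Z R 1 = 0 := by
        rw [hR, Jin_sub_left hZ hWint, hm, Jin_Cmul_left, hmeanψ, mul_zero, sub_zero]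
      have hψR : Jin p q Z (ψ (n+1)) R = 0 := hlower (n+1) n R hdegR (by omega)
      have hJBψR : JB p q Z (ψ (n+1)) R = 0 := by
        rw [JB_eq_Lop hZ hWint hp hq, hψL (n+1), Jin_smul_left, hψR]; ring
      have hJin : Jin p q Z P P = Jin p q Z R R + c^2 * Jin p q Z (ψ (n+1)) (ψ (n+1)) := by
        rw [hsplit]
        simp only [Jin_add_left hZ hWint, Jin_add_right hZ hWint, Jin_Cmul_left, Jin_Cmul_right]
        rw [hψR, Jin_comm (f := R) (g := ψ (n+1)), hψR]
        ring
      have hJB : JB p q Z P P = JB p q Z R R + c^2 * JB p q Z (ψ (n+1)) (ψ (n+1)) := by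
        rw [hsplit]
        simp only [JB_add_left hZ hWint, JB_add_right hZ hWint, JB_Cmul_left, JB_Cmul_right]
        rw [hJBψR, JB_comm (f := R) (g := ψ (n+1)), hJBψR]
        ring
      have hihR := ih R hdegR hmeanR
      have hd := hdiag (n+1)
      have hge := lam_ge p q (n+1) hpq (by omega)
      have hnn := Jin_self_nonneg hZ hWint (ψ (n+1))
      rw [hJin, hJB, hd]
      nlinarith [mul_nonneg (sq_nonneg c) (mul_nonneg (sub_nonneg.2 hge) hnn)]
  exact main P.natDegree P le_rfl hmean

/-- polynomial antiderivative -/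
def pint (g : ℝ[X]) : ℝ[X] :=
  ∑ i ∈ Finset.range (g.natDegree + 1), C (g.coeff i / (i+1)) * X^(i+1)

omit hp hq hZ hWint hWone in
lemma derivative_pint (g : ℝ[X]) : derivative (pint g) = g := by
  rw [pint, map_sum]
  have h : ∀ i : ℕ, derivative (C (g.coeff i / (i+1)) * X^(i+1)) = C (g.coeff i) * X^i := by
    intro i
    rw [derivative_C_mul, derivative_X_pow]
    rw [← mul_assoc, ← C_mul, Nat.add_sub_cancel]
    congr 2
    push_cast
    field_simp
  simp_rw [h]
  exact (g.as_sum_range_C_mul_X_pow).symm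

lemma Jin_one_one : Jin p q Z 1 1 = 1 := by
  have he : Jin p q Z 1 1 = ∫ x in Ioo (-1:ℝ) 1, W p q Z x := by
    unfold Jin
    refine setIntegral_congr_fun measurableSet_Ioo fun x _ => by simp
  rw [he, hWone]

/-- the main inequality, at the level of weighted Lebesgue integrals -/
lemma final (f : ℝ → ℝ) (hf : ContDiffOn ℝ 1 f (Icc (-1:ℝ) 1))
    (hmean : (∫ x in Ioo (-1:ℝ) 1, f x * W p q Z x) = 0) :
    (p + q) * ∫ x in Ioo (-1:ℝ) 1, f x ^ 2 * W p q Z x ≤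
      ∫ x in Ioo (-1:ℝ) 1,
        ((1 - x^2) * (derivWithin f (Icc (-1:ℝ) 1) x) ^ 2) * W p q Z x := by
  have hpq : 0 < p + q := by linarith
  set f' : ℝ → ℝ := derivWithin f (Icc (-1:ℝ) 1) with hf'
  have hf'cont : ContinuousOn f' (Icc (-1:ℝ) 1) :=
    hf.continuousOn_derivWithin (uniqueDiffOn_Icc (by norm_num)) le_rfl
  have hfc : ContinuousOn f (Icc (-1:ℝ) 1) := hf.continuousOn
  have hfderiv : ∀ x ∈ Ioo (-1:ℝ) 1, HasDerivAt f (f' x) x := by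
    intro x hx
    have hnb : Icc (-1:ℝ) 1 ∈ nhds x := Icc_mem_nhds hx.1 hx.2
    have hdx : DifferentiableWithinAt ℝ f (Icc (-1:ℝ) 1) x :=
      (hf.differentiableOn one_ne_zero) x (Ioo_subset_Icc_self hx)
    have hda : DifferentiableAt ℝ f x := hdx.differentiableAt hnb
    have : f' x = deriv f x := derivWithin_of_mem_nhds hnb
    rw [this]
    exact hda.hasDerivAt
  -- bounds
  obtain ⟨Cf, hCf⟩ := isCompact_Icc.exists_bound_of_continuousOn hfc
  obtain ⟨Cf', hCf'⟩ := isCompact_Icc.exists_bound_of_continuousOn hf'cont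
  have h0m : (0:ℝ) ∈ Icc (-1:ℝ) 1 := by norm_num
  have hCf0 : 0 ≤ Cf := le_trans (norm_nonneg _) (hCf 0 h0m)
  have hCf'0 : 0 ≤ Cf' := le_trans (norm_nonneg _) (hCf' 0 h0m)
  set A := ∫ x in Ioo (-1:ℝ) 1, f x ^ 2 * W p q Z x with hA
  set B := ∫ x in Ioo (-1:ℝ) 1, ((1 - x^2) * f' x ^ 2) * W p q Z x with hB
  set K := (p + q) * (2*(2*Cf+2)) + (2*Cf'+1) with hK
  have hK0 : 0 < K + 1 := by positivity
  show (p + q) * A ≤ B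
  refine le_of_forall_pos_le_add (fun ε hε => ?_)
  set δ := min 1 (ε / (K+1)) with hδdef
  have hδ : 0 < δ := lt_min one_pos (div_pos hε hK0)
  have hδ1 : δ ≤ 1 := min_le_left _ _
  have hδK : δ * K ≤ ε := by
    have h1 : δ ≤ ε / (K+1) := min_le_right _ _
    have h2 : K ≤ K + 1 := by linarith
    calc δ * K ≤ (ε / (K+1)) * (K+1) :=
          mul_le_mul h1 h2 (by nlinarith [mul_nonneg hpq.le (show (0:ℝ) ≤ 2*(2*Cf+2) by linarith)] : (0:ℝ) ≤ K) (le_of_lt (div_pos hε hK0))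
      _ = ε := div_mul_cancel₀ ε (by linarith)
  -- Weierstrass approximation of f'
  obtain ⟨g, hg⟩ := exists_polynomial_near_of_continuousOn (-1) 1 f' hf'cont δ hδ
  -- polynomial Q with Q' = g, Q(0) = f(0)
  set Q : ℝ[X] := pint g + Polynomial.C (f 0 - (pint g).eval 0) with hQ
  have hQd : derivative Q = g := by
    rw [hQ, derivative_add, derivative_C, add_zero, derivative_pint]
  have hQ0 : Q.eval 0 = f 0 := by rw [hQ]; simp
  -- closeness of Q to f on Ioo
  have hQf : ∀ x ∈ Ioo (-1:ℝ) 1, |Q.eval x - f x| ≤ δ := by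
    intro x hx
    have hsub : uIcc (0:ℝ) x ⊆ Ioo (-1:ℝ) 1 :=
      Set.ordConnected_Ioo.uIcc_subset (by norm_num) hx
    have hfint : f x - f 0 = ∫ t in (0:ℝ)..x, f' t := by
      rw [intervalIntegral.integral_eq_sub_of_hasDerivAt
        (fun t ht => hfderiv t (hsub ht))
        ((hf'cont.mono (fun t ht => Ioo_subset_Icc_self (hsub ht))).intervalIntegrable)]
    have hQint : Q.eval x - Q.eval 0 = ∫ t in (0:ℝ)..x, g.eval t := by
      rw [intervalIntegral.integral_eq_sub_of_hasDerivAt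
        (f := fun y => Q.eval y) (f' := fun y => g.eval y)
        (fun t _ => by simpa [hQd] using Q.hasDerivAt t)
        ((g.continuous.continuousOn).intervalIntegrable)]
    have hdiff : Q.eval x - f x = ∫ t in (0:ℝ)..x, (g.eval t - f' t) := by
      rw [intervalIntegral.integral_sub ((g.continuous.continuousOn).intervalIntegrable)
        ((hf'cont.mono (fun t ht => Ioo_subset_Icc_self (hsub ht))).intervalIntegrable),
        ← hQint, ← hfint, hQ0]
      ring
    rw [hdiff]
    have hb : ∀ t ∈ Set.uIoc (0:ℝ) x, ‖g.eval t - f' t‖ ≤ δ := by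
      intro t ht
      have htm : t ∈ Icc (-1:ℝ) 1 := Ioo_subset_Icc_self (hsub (Set.Ioc_subset_Icc_self ht))
      exact le_of_lt (by simpa [Real.norm_eq_abs] using hg t htm)
    calc |∫ t in (0:ℝ)..x, (g.eval t - f' t)| ≤ δ * |x - 0| :=
          intervalIntegral.norm_integral_le_of_norm_le_const hb
      _ ≤ δ * 1 := by
          have : |x - 0| ≤ 1 := by
            rw [sub_zero, abs_le]; exact ⟨le_of_lt hx.1, le_of_lt hx.2⟩
          exact mul_le_mul_of_nonneg_left this hδ.le
      _ = δ := mul_one δ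
  -- the mean of Q
  set c := Jin p q Z Q 1 with hc
  have hcval : c = ∫ x in Ioo (-1:ℝ) 1, Q.eval x * W p q Z x := by
    rw [hc]; unfold Jin
    refine setIntegral_congr_fun measurableSet_Ioo fun x _ => by simp
  have hcQf : c = ∫ x in Ioo (-1:ℝ) 1, (Q.eval x - f x) * W p q Z x := by
    rw [hcval, ← sub_zero (∫ x in Ioo (-1:ℝ) 1, Q.eval x * W p q Z x), ← hmean,
      ← integral_sub (integrable_mul_W p q Z hZ hWint (Q.continuous.continuousOn))
        (integrable_mul_W p q Z hZ hWint hfc)]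
    congr 1; funext x; ring
  have hcabs : |c| ≤ δ := by
    rw [hcQf]
    have habs : (fun x => |Q.eval x - f x| * |W p q Z x|)
        = (fun x => |(Q.eval x - f x) * W p q Z x|) := funext fun x => (abs_mul _ _).symm
    have h1 : |∫ x in Ioo (-1:ℝ) 1, (Q.eval x - f x) * W p q Z x|
        ≤ ∫ x in Ioo (-1:ℝ) 1, |Q.eval x - f x| * |W p q Z x| := by
      simpa [Real.norm_eq_abs, abs_mul] using
        norm_integral_le_integral_norm (μ := volume.restrict (Ioo (-1:ℝ) 1))
          (fun x => (Q.eval x - f x) * W p q Z x)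
    refine h1.trans ?_
    have h2 : (∫ x in Ioo (-1:ℝ) 1, |Q.eval x - f x| * |W p q Z x|)
        ≤ ∫ x in Ioo (-1:ℝ) 1, δ * W p q Z x := by
      refine setIntegral_mono_on ?_ (hWint.const_mul δ) measurableSet_Ioo ?_
      · rw [habs]
        exact (integrable_mul_W p q Z hZ hWint
          ((Q.continuous.continuousOn.sub hfc))).abs
      · intro x hx
        rw [abs_of_nonneg (W_nonneg p q Z hZ hx)]
        exact mul_le_mul_of_nonneg_right (hQf x hx) (W_nonneg p q Z hZ hx)
    refine h2.trans ?_
    rw [integral_const_mul, hWone, mul_one]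
  -- the centered polynomial
  set P : ℝ[X] := Q - Polynomial.C c with hP
  have hPd : derivative P = g := by rw [hP, derivative_sub, derivative_C, sub_zero, hQd]
  have hPmean : Jin p q Z P 1 = 0 := by
    rw [hP, Jin_sub_left hZ hWint, ← hc, ← mul_one (Polynomial.C c), Jin_Cmul_left,
      Jin_one_one hp hq hZ hWint hWone, mul_one, sub_self]
  have hkey := poly_poincare hp hq hZ hWint hWone P hPmean
  -- closeness of P to f
  have hPf : ∀ x ∈ Ioo (-1:ℝ) 1, |P.eval x - f x| ≤ 2*δ := by
    intro x hx
    rw [hP]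
    simp only [eval_sub, eval_C]
    calc |Q.eval x - c - f x| ≤ |Q.eval x - f x| + |c| := by
          rw [sub_right_comm]; exact abs_sub _ _
      _ ≤ δ + δ := add_le_add (hQf x hx) hcabs
      _ = 2*δ := by ring
  -- comparison of A with Jin P P
  have hAP : A ≤ Jin p q Z P P + 2*δ*(2*Cf+2) := by
    have hmono : A ≤ ∫ x in Ioo (-1:ℝ) 1,
        (P.eval x * P.eval x + 2*δ*(2*Cf+2)) * W p q Z x := by
      refine setIntegral_mono_on
        (integrable_mul_W p q Z hZ hWint (hfc.pow 2))
        (integrable_mul_W p q Z hZ hWint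
          (((P.continuous.mul P.continuous).add continuous_const).continuousOn))
        measurableSet_Ioo ?_
      intro x hx
      refine mul_le_mul_of_nonneg_right ?_ (W_nonneg p q Z hZ hx)
      have h1 := abs_le.mp (hPf x hx)
      have h2 := abs_le.mp (by simpa [Real.norm_eq_abs] using hCf x (Ioo_subset_Icc_self hx))
      nlinarith [h1.1, h1.2, h2.1, h2.2, hδ.le, hδ1, sq_nonneg (P.eval x - f x)]
    have hsplit2 : (∫ x in Ioo (-1:ℝ) 1, (P.eval x * P.eval x + 2*δ*(2*Cf+2)) * W p q Z x)
        = Jin p q Z P P + 2*δ*(2*Cf+2) := by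
      have he : (∫ x in Ioo (-1:ℝ) 1, (P.eval x * P.eval x + 2*δ*(2*Cf+2)) * W p q Z x)
          = (∫ x in Ioo (-1:ℝ) 1, P.eval x * P.eval x * W p q Z x)
            + ∫ x in Ioo (-1:ℝ) 1, (2*δ*(2*Cf+2)) * W p q Z x := by
        rw [← integral_add (Jin_integrable hZ hWint P P)
          (hWint.const_mul _)]
        congr 1; funext x; ring
      rw [he, integral_const_mul, hWone, mul_one]
      rfl
    rw [hsplit2] at hmono
    exact hmono
  -- comparison of JB P P with B
  have hBP : JB p q Z P P ≤ B + δ*(2*Cf'+1) := by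
    have hJBval : JB p q Z P P = ∫ x in Ioo (-1:ℝ) 1,
        (1 - x^2) * (g.eval x * g.eval x) * W p q Z x := by
      unfold JB; rw [hPd]
    rw [hJBval]
    have hmono : (∫ x in Ioo (-1:ℝ) 1, (1 - x^2) * (g.eval x * g.eval x) * W p q Z x)
        ≤ ∫ x in Ioo (-1:ℝ) 1, ((1 - x^2) * f' x ^ 2 + δ*(2*Cf'+1)) * W p q Z x := by
      refine setIntegral_mono_on
        (integrable_mul_W p q Z hZ hWint
          (((continuous_const.sub (continuous_id.pow 2)).mul
            (g.continuous.mul g.continuous)).continuousOn))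
        (integrable_mul_W p q Z hZ hWint
          ((((continuous_const.sub (continuous_id.pow 2)).continuousOn.mul
            (hf'cont.pow 2)).add continuousOn_const)))
        measurableSet_Ioo ?_
      intro x hx
      refine mul_le_mul_of_nonneg_right ?_ (W_nonneg p q Z hZ hx)
      have hxI : x ∈ Icc (-1:ℝ) 1 := Ioo_subset_Icc_self hx
      have he := abs_le.mp (le_of_lt (hg x hxI))
      have hf'b := abs_le.mp (by simpa [Real.norm_eq_abs] using hCf' x hxI)
      have ht0 : (0:ℝ) ≤ 1 - x^2 := by nlinarith [hx.1, hx.2]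
      have ht1 : 1 - x^2 ≤ 1 := by nlinarith [sq_nonneg x]
      have s1 : (g.eval x)^2 - (f' x)^2 ≤ δ*(2*Cf'+1) := by
        nlinarith [he.1, he.2, hf'b.1, hf'b.2, hδ.le, hδ1]
      have s2 : (1 - x^2) * ((g.eval x)^2 - (f' x)^2) ≤ δ*(2*Cf'+1) := by
        rcases le_or_gt ((g.eval x)^2 - (f' x)^2) 0 with h | h
        · refine le_trans (mul_nonpos_of_nonneg_of_nonpos ht0 h) ?_
          positivity
        · exact le_trans (mul_le_of_le_one_left h.le ht1) s1
      nlinarith [s2]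
    refine hmono.trans (le_of_eq ?_)
    have he : (∫ x in Ioo (-1:ℝ) 1, ((1 - x^2) * f' x ^ 2 + δ*(2*Cf'+1)) * W p q Z x)
        = (∫ x in Ioo (-1:ℝ) 1, (1 - x^2) * f' x ^ 2 * W p q Z x)
          + ∫ x in Ioo (-1:ℝ) 1, (δ*(2*Cf'+1)) * W p q Z x := by
      have h1 : IntegrableOn (fun x => (1 - x^2) * f' x ^ 2 * W p q Z x)
          (Ioo (-1:ℝ) 1) volume :=
        integrable_mul_W p q Z hZ hWint
          ((continuous_const.sub (continuous_pow 2)).continuousOn.mul (hf'cont.pow 2))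
      have h2 : IntegrableOn (fun x => (δ*(2*Cf'+1)) * W p q Z x) (Ioo (-1:ℝ) 1) volume :=
        hWint.const_mul _
      rw [← integral_add h1 h2]
      congr 1; funext x; ring
    rw [he, integral_const_mul, hWone, mul_one, hB]
  -- chain everything
  have hchain : (p + q) * A ≤ B + δ * K := by
    have h1 : (p + q) * A ≤ (p + q) * (Jin p q Z P P + 2*δ*(2*Cf+2)) :=
      mul_le_mul_of_nonneg_left hAP hpq.le
    have h2 : (p + q) * Jin p q Z P P ≤ JB p q Z P P := hkey
    have h3 : δ * K = (p+q) * (2*δ*(2*Cf+2)) + δ*(2*Cf'+1) := by rw [hK]; ring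
    nlinarith [h1, h2, hBP]
  exact hchain.trans (by linarith [hδK])

end main

end
end JacobiAux

open MeasureTheory

/-- Poincaré inequality for the Jacobi-type measure: let `μ` be the probability measure on
`[-1,1]` with density proportional to `(1-x)^{p-1}(1+x)^{q-1}` (`p, q > 0`).  Then for every
continuously differentiable `f` on `[-1,1]` with mean zero under `μ`,
`Var f = ∫ f² dμ ≤ (1/(p+q)) ∫ (1-x²) f'(x)² dμ`. -/
theorem jacobi_measure_poincare (p q : ℝ) (hp : 0 < p) (hq : 0 < q)
    (Z : ℝ) (μ : Measure ℝ)
    (hμ : μ = (volume.restrict (Set.Ioo (-1 : ℝ) 1)).withDensity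
      (fun x => ENNReal.ofReal ((1 - x) ^ (p - 1) * (1 + x) ^ (q - 1) / Z)))
    (hprob : IsProbabilityMeasure μ)
    (f : ℝ → ℝ) (hf : ContDiffOn ℝ 1 f (Set.Icc (-1 : ℝ) 1))
    (hmean : ∫ x, f x ∂μ = 0) :
    ∫ x, (f x) ^ 2 ∂μ ≤ (1 / (p + q)) * ∫ x, (1 - x ^ 2) * (deriv f x) ^ 2 ∂μ := by
  have hpq : 0 < p + q := by linarith
  set W := JacobiAux.W p q Z with hWset
  have hWx : ∀ x, W x = (1 - x) ^ (p - 1) * (1 + x) ^ (q - 1) / Z := fun _ => rfl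
  have hmeasW : Measurable W := by
    rw [hWset]
    unfold JacobiAux.W
    fun_prop
  have hμ' : μ = (volume.restrict (Set.Ioo (-1 : ℝ) 1)).withDensity
      (fun x => ENNReal.ofReal (W x)) := hμ
  have huniv : (∫⁻ x in Set.Ioo (-1:ℝ) 1, ENNReal.ofReal (W x)) = 1 := by
    have h1 : μ Set.univ = 1 := hprob.measure_univ
    rw [hμ', withDensity_apply _ MeasurableSet.univ, Measure.restrict_univ] at h1
    exact h1
  have hZpos : 0 < Z := by
    by_contra h
    push_neg at h
    have hz : ∀ x ∈ Set.Ioo (-1:ℝ) 1, ENNReal.ofReal (W x) = (0:ENNReal) := by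
      intro x hx
      simp only [Set.mem_Ioo] at hx
      refine ENNReal.ofReal_eq_zero.mpr ?_
      rw [hWx]
      exact div_nonpos_of_nonneg_of_nonpos
        (mul_nonneg (Real.rpow_nonneg (by linarith) _) (Real.rpow_nonneg (by linarith) _)) h
    have : (∫⁻ x in Set.Ioo (-1:ℝ) 1, ENNReal.ofReal (W x)) = 0 := by
      rw [setLIntegral_congr_fun measurableSet_Ioo hz]
      simp
    rw [this] at huniv
    exact zero_ne_one huniv
  have hWaeNonneg : 0 ≤ᵐ[volume.restrict (Set.Ioo (-1:ℝ) 1)] W :=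
    (ae_restrict_iff' measurableSet_Ioo).mpr
      (Filter.Eventually.of_forall (fun x hx => JacobiAux.W_nonneg p q Z hZpos hx))
  have hWint : IntegrableOn W (Set.Ioo (-1:ℝ) 1) volume := by
    refine ⟨hmeasW.aestronglyMeasurable, ?_⟩
    rw [hasFiniteIntegral_iff_ofReal hWaeNonneg, huniv]
    exact ENNReal.one_lt_top
  have hWone : (∫ x in Set.Ioo (-1:ℝ) 1, W x) = 1 := by
    rw [integral_eq_lintegral_of_nonneg_ae hWaeNonneg hmeasW.aestronglyMeasurable, huniv]
    simp
  have key0 : ∀ g : ℝ → ℝ, ∫ x, g x ∂μ = ∫ x in Set.Ioo (-1:ℝ) 1, g x * W x := by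
    intro g
    rw [hμ']
    have heq : (fun x => ENNReal.ofReal (W x))
        = fun x => ((W x).toNNReal : ℝ≥0∞) := rfl
    rw [heq, integral_withDensity_eq_integral_smul hmeasW.real_toNNReal g]
    refine setIntegral_congr_fun measurableSet_Ioo fun x hx => ?_
    rw [NNReal.smul_def, Real.coe_toNNReal _ (JacobiAux.W_nonneg p q Z hZpos hx),
      smul_eq_mul, mul_comm]
  have hm0 : (∫ x in Set.Ioo (-1:ℝ) 1, f x * W x) = 0 := by
    rw [← key0 f]; exact hmean
  have hfinal := JacobiAux.final hp hq hZpos hWint hWone f hf hm0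
  rw [key0 (fun x => f x ^ 2), key0 (fun x => (1 - x ^ 2) * (deriv f x) ^ 2)]
  have hder : ∀ x ∈ Set.Ioo (-1:ℝ) 1,
      (1 - x ^ 2) * (deriv f x) ^ 2 * W x
        = ((1 - x^2) * (derivWithin f (Set.Icc (-1:ℝ) 1) x) ^ 2) * W x := by
    intro x hx
    rw [derivWithin_of_mem_nhds (Icc_mem_nhds hx.1 hx.2)]
  rw [setIntegral_congr_fun measurableSet_Ioo hder]
  have h2 : (∫ x in Set.Ioo (-1:ℝ) 1, f x ^ 2 * W x)
      ≤ (∫ x in Set.Ioo (-1:ℝ) 1,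
          ((1 - x^2) * (derivWithin f (Set.Icc (-1:ℝ) 1) x) ^ 2) * W x) / (p + q) :=
    (le_div_iff₀ hpq).mpr (by linarith [hfinal])
  rw [one_div, inv_mul_eq_div]
  exact h2
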